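/- Let μ and η be trigonometric polynomials on ℝ² whose Fourier coefficients are supported in rectangles of size k₁×k₂ and l₁×l₂ respectively. If P[μ] and P[η] have no common non-constant polynomial factor, then the system μ(x) = η(x) = 0 has at most (k₁+k₂)(l₁+l₂) solutions in [0,1)². -/

import Mathlib

set_option maxHeartbeats 1000000
set_option synthInstance.maxHeartbeats 400000


open scoped Real

/-- The `k₁ × k₂` rectangle of Fourier indices `{0,…,k₁-1} × {0,…,k₂-1}`. -/
def rect (k₁ k₂ : ℕ) : Finset (ℕ × ℕ) := Finset.range k₁ ×ˢ Finset.range k₂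

noncomputable def trigPolyNat (Λ : Finset (ℕ × ℕ)) (c : ℕ × ℕ → ℂ) (x : ℝ × ℝ) : ℂ :=
  ∑ k ∈ Λ, c k * Complex.exp (2 * Real.pi * Complex.I * ((k.1 : ℂ) * (x.1 : ℂ) + (k.2 : ℂ) * (x.2 : ℂ)))

noncomputable def assocPoly (Λ : Finset (ℕ × ℕ)) (c : ℕ × ℕ → ℂ) : MvPolynomial (Fin 2) ℂ :=
  ∑ k ∈ Λ, MvPolynomial.C (c k) * MvPolynomial.X 0 ^ k.1 * MvPolynomial.X 1 ^ k.2

namespace BezoutAux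
open MvPolynomial
noncomputable section

abbrev S := MvPolynomial (Fin 2) ℂ

/-- degree in variable 0 is additive. -/
lemma degreeOf0_mul {f g : S} (hf : f ≠ 0) (hg : g ≠ 0) :
    degreeOf 0 (f * g) = degreeOf 0 f + degreeOf 0 g := by
  have h := MvPolynomial.natDegree_finSuccEquiv (R := ℂ) (n := 1)
  rw [← h, ← h, ← h, map_mul]
  have hf' : (finSuccEquiv ℂ 1) f ≠ 0 :=
    (map_ne_zero_iff (finSuccEquiv ℂ 1) (AlgEquiv.injective _)).mpr hf
  have hg' : (finSuccEquiv ℂ 1) g ≠ 0 :=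
    (map_ne_zero_iff (finSuccEquiv ℂ 1) (AlgEquiv.injective _)).mpr hg
  exact Polynomial.natDegree_mul hf' hg'

lemma degreeOf1_eq (f : S) :
    degreeOf 1 f = degreeOf 0 (rename (Equiv.swap (0:Fin 2) 1) f) := by
  have := MvPolynomial.degreeOf_rename_of_injective
    (p := f) (f := ⇑(Equiv.swap (0:Fin 2) 1)) (Equiv.injective _) 1
  simpa using this.symm

lemma degreeOf1_mul {f g : S} (hf : f ≠ 0) (hg : g ≠ 0) :
    degreeOf 1 (f * g) = degreeOf 1 f + degreeOf 1 g := by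
  rw [degreeOf1_eq, degreeOf1_eq f, degreeOf1_eq g, map_mul]
  have hf' : rename (Equiv.swap (0:Fin 2) 1) f ≠ 0 := by
    simpa using (map_ne_zero_iff _ (rename_injective _ (Equiv.injective _))).mpr hf
  have hg' : rename (Equiv.swap (0:Fin 2) 1) g ≠ 0 := by
    simpa using (map_ne_zero_iff _ (rename_injective _ (Equiv.injective _))).mpr hg
  exact degreeOf0_mul hf' hg'

/-- the box submodule -/
def box (m n : ℕ) : Submodule ℂ S :=
  restrictSupport ℂ {e : Fin 2 →₀ ℕ | e 0 ≤ m ∧ e 1 ≤ n}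

lemma mem_box {m n : ℕ} {f : S} :
    f ∈ box m n ↔ degreeOf 0 f ≤ m ∧ degreeOf 1 f ≤ n := by
  rw [box, restrictSupport, AddMonoidAlgebra.mem_supported, degreeOf_le_iff, degreeOf_le_iff]
  constructor
  · intro h; exact ⟨fun e he => (h he).1, fun e he => (h he).2⟩
  · intro h e he; exact ⟨h.1 e he, h.2 e he⟩

lemma box_mono {m n m' n' : ℕ} (hm : m ≤ m') (hn : n ≤ n') : box m n ≤ box m' n' :=
  restrictSupport_mono ℂ (fun e he => ⟨he.1.trans hm, he.2.trans hn⟩)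

lemma mul_mem_box {a b m n : ℕ} {f g : S} (hf : degreeOf 0 f ≤ a) (hf' : degreeOf 1 f ≤ b)
    (hg : g ∈ box m n) : f * g ∈ box (a + m) (b + n) := by
  rw [mem_box] at hg ⊢
  exact ⟨(degreeOf_mul_le _ _ _).trans (add_le_add hf hg.1),
    (degreeOf_mul_le _ _ _).trans (add_le_add hf' hg.2)⟩

instance boxFinite (m n : ℕ) : Module.Finite ℂ (box m n) := by
  have : Finite {e : Fin 2 →₀ ℕ | e 0 ≤ m ∧ e 1 ≤ n} := by
    have : Finite {e : Fin 2 →₀ ℕ | ∀ i, e i ≤ max m n} := by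
      exact ((Set.Finite.pi' fun _ ↦ Set.finite_le_nat _).preimage
        DFunLike.coe_injective.injOn).to_subtype
    apply Finite.Set.subset {e : Fin 2 →₀ ℕ | ∀ i, e i ≤ max m n}
    intro e he
    intro i
    fin_cases i
    · exact he.1.trans (le_max_left _ _)
    · exact he.2.trans (le_max_right _ _)
  exact Module.Finite.of_basis (basisRestrictSupport ℂ _)

def boxIndexEquiv (m n : ℕ) :
    {e : Fin 2 →₀ ℕ | e 0 ≤ m ∧ e 1 ≤ n} ≃ Fin (m+1) × Fin (n+1) where
  toFun e := (⟨e.1 0, Nat.lt_succ_of_le e.2.1⟩, ⟨e.1 1, Nat.lt_succ_of_le e.2.2⟩)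
  invFun p := ⟨Finsupp.single 0 p.1.1 + Finsupp.single 1 p.2.1, by
    constructor <;> simp [Finsupp.single_apply] <;> omega⟩
  left_inv e := by
    ext i
    fin_cases i <;> simp [Finsupp.single_apply]
  right_inv p := by
    ext <;> simp [Finsupp.single_apply]

lemma finrank_box (m n : ℕ) : Module.finrank ℂ (box m n) = (m+1) * (n+1) := by
  have : Fintype {e : Fin 2 →₀ ℕ | e 0 ≤ m ∧ e 1 ≤ n} :=
    Fintype.ofEquiv _ (boxIndexEquiv m n).symm
  rw [show box m n = restrictSupport ℂ {e : Fin 2 →₀ ℕ | e 0 ≤ m ∧ e 1 ≤ n} from rfl,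
    Module.finrank_eq_card_basis (basisRestrictSupport ℂ _)]
  rw [Fintype.card_congr (boxIndexEquiv m n)]
  simp

def pev (z : ℂ × ℂ) : S →+* ℂ := eval ![z.1, z.2]

lemma one_mem_box : (1 : S) ∈ box 0 0 := by
  rw [mem_box, ← C_1]
  exact ⟨le_of_eq (degreeOf_C _ _), le_of_eq (degreeOf_C _ _)⟩

lemma lin_mem_box (i : Fin 2) (α β : ℂ) : C α * (X i - C β) ∈ box 1 1 := by
  have hs : (C α * (X i - C β) : S).support ⊆ {Finsupp.single i 1} ∪ {0} := by
    intro m hm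
    rw [← smul_eq_C_mul, sub_eq_add_neg] at hm
    have h1 := MvPolynomial.support_smul hm
    have h2 := MvPolynomial.support_add h1
    rw [Finset.mem_union] at h2
    rcases h2 with h | h
    · rw [support_X] at h; exact Finset.mem_union_left _ h
    · rw [support_neg, C_apply, support_monomial] at h
      split at h
      · simp at h
      · exact Finset.mem_union_right _ h
  rw [mem_box]
  constructor <;> apply degreeOf_le_iff.mpr <;> intro m hm <;>
    rcases Finset.mem_union.mp (hs hm) with h | h <;>
    simp_all [Finsupp.single_apply] <;> split <;> simp
lemma prod_mem_box {ι : Type*} (F : Finset ι) (g : ι → S) (hg : ∀ w ∈ F, g w ∈ box 1 1) :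
    ∏ w ∈ F, g w ∈ box F.card F.card := by
  classical
  induction F using Finset.cons_induction with
  | empty => simpa using one_mem_box
  | cons a F ha ih =>
    rw [Finset.prod_cons, Finset.card_cons]
    have h1 := hg a (Finset.mem_cons_self a F)
    rw [mem_box] at h1
    have := mul_mem_box h1.1 h1.2 (ih (fun w hw => hg w (Finset.mem_cons_of_mem hw)))
    simpa [Nat.add_comm] using this

lemma interpolation (T : Finset (ℂ × ℂ)) {t : ℂ × ℂ} (ht : t ∈ T) :
    ∃ f ∈ box T.card T.card, pev t f = 1 ∧ ∀ u ∈ T, u ≠ t → pev u f = 0 := by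
  classical
  set h : ℂ × ℂ → S := fun w =>
    if w.1 ≠ t.1 then C (t.1 - w.1)⁻¹ * (X 0 - C w.1)
    else C (t.2 - w.2)⁻¹ * (X 1 - C w.2) with hh
  refine ⟨∏ w ∈ T.erase t, h w, ?_, ?_, ?_⟩
  · apply box_mono (Nat.le_of_lt (Finset.card_erase_lt_of_mem ht))
      (Nat.le_of_lt (Finset.card_erase_lt_of_mem ht))
    exact prod_mem_box _ _ (fun w _ => by rw [hh]; dsimp only; split <;> apply lin_mem_box)
  · rw [map_prod]
    apply Finset.prod_eq_one
    intro w hw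
    rw [hh]; dsimp only
    split_ifs with hw1
    · simp only [pev, map_mul, map_sub, eval_C, eval_X]
      rw [show (![t.1, t.2] : Fin 2 → ℂ) 0 = t.1 from rfl]
      exact inv_mul_cancel₀ (sub_ne_zero.mpr (Ne.symm hw1))
    · push_neg at hw1
      have hw2 : t.2 ≠ w.2 := by
        intro h2
        exact (Finset.ne_of_mem_erase hw) (Prod.ext hw1 h2.symm)
      simp only [pev, map_mul, map_sub, eval_C, eval_X]
      rw [show (![t.1, t.2] : Fin 2 → ℂ) 1 = t.2 from rfl]
      exact inv_mul_cancel₀ (sub_ne_zero.mpr hw2)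
  · intro u hu hut
    rw [map_prod]
    apply Finset.prod_eq_zero (Finset.mem_erase.mpr ⟨hut, hu⟩)
    rw [hh]; dsimp only
    split_ifs
    · simp only [pev, map_mul, map_sub, eval_C, eval_X]
      rw [show (![u.1, u.2] : Fin 2 → ℂ) 0 = u.1 from rfl]
      simp
    · simp only [pev, map_mul, map_sub, eval_C, eval_X]
      rw [show (![u.1, u.2] : Fin 2 → ℂ) 1 = u.2 from rfl]
      simp
theorem key (p q : S) (hp : p ≠ 0) (hq : q ≠ 0)
    (hcop : ∀ r : S, r ∣ p → r ∣ q → IsUnit r)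
    (T : Finset (ℂ × ℂ)) (hT : ∀ z ∈ T, pev z p = 0 ∧ pev z q = 0) :
    T.card ≤ degreeOf 0 p * degreeOf 1 q + degreeOf 1 p * degreeOf 0 q := by
  classical
  set a := degreeOf 0 p with ha
  set b := degreeOf 1 p with hb
  set c := degreeOf 0 q with hc
  set d := degreeOf 1 q with hd
  set s := T.card with hs
  set V := box (a+c+s) (b+d+s) with hV
  set B₁ := box (c+s) (d+s) with hB₁
  set B₂ := box (a+s) (b+s) with hB₂
  set B₃ := box s s with hB₃
  -- the evaluation map
  let ev : S →ₗ[ℂ] (T → ℂ) :=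
    { toFun := fun f t => pev t.1 f
      map_add' := fun f g => by ext t; simp [pev]
      map_smul' := fun r f => by ext t; simp [pev, smul_eq_C_mul] }
  -- the ideal map
  let L : (B₁ × B₂) →ₗ[ℂ] S :=
    { toFun := fun AB => p * (AB.1 : S) + q * (AB.2 : S)
      map_add' := fun x y => by simp; ring
      map_smul' := fun r x => by simp [smul_eq_C_mul]; ring }
  -- the syzygy map
  let K : B₃ →ₗ[ℂ] (B₁ × B₂) :=
    { toFun := fun C => (⟨q * (C : S), mul_mem_box (le_refl c) (le_refl d) C.2⟩,
        ⟨-(p * (C : S)), neg_mem (mul_mem_box (le_refl a) (le_refl b) C.2)⟩)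
      map_add' := fun x y => by
        refine Prod.ext (Subtype.ext ?_) (Subtype.ext ?_) <;>
          simp only [Prod.fst_add, Prod.snd_add, Submodule.coe_add] <;> ring
      map_smul' := fun r x => by
        refine Prod.ext (Subtype.ext ?_) (Subtype.ext ?_) <;>
          simp only [Prod.smul_fst, Prod.smul_snd, Submodule.coe_smul, smul_eq_C_mul,
            RingHom.id_apply] <;> ring }
  let φ : V →ₗ[ℂ] (T → ℂ) := ev.comp V.subtype
  -- φ is surjective
  have hφsurj : LinearMap.range φ = ⊤ := by
    rw [eq_top_iff]
    rintro v -
    have hv : v = ∑ t : T, v t • (Pi.single t 1 : T → ℂ) := by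
      rw [← Finset.univ_sum_single v]
      refine Finset.sum_congr rfl fun t _ => ?_
      ext u
      simp [Pi.single_apply]
    rw [hv]
    apply Submodule.sum_mem
    intro t _
    apply Submodule.smul_mem
    obtain ⟨f, hfV, hf1, hf0⟩ := interpolation T t.2
    have hfV' : f ∈ V := box_mono (by omega) (by omega) hfV
    refine ⟨⟨f, hfV'⟩, ?_⟩
    ext u
    by_cases hu : u = t
    · subst hu; simp [φ, ev, hf1, Pi.single_apply]
    · have : u.1 ≠ t.1 := fun h => hu (Subtype.ext h)
      simp [φ, ev, hf0 u.1 u.2 this, Pi.single_apply, hu]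
  -- range L ≤ V
  have hLV : LinearMap.range L ≤ V := by
    rintro x ⟨⟨A, B⟩, rfl⟩
    have h1 : p * (A : S) ∈ box (a+(c+s)) (b+(d+s)) :=
      mul_mem_box (le_refl a) (le_refl b) A.2
    have h2 : q * (B : S) ∈ box (c+(a+s)) (d+(b+s)) :=
      mul_mem_box (le_refl c) (le_refl d) B.2
    exact add_mem (box_mono (by omega) (by omega) h1) (box_mono (by omega) (by omega) h2)
  -- range L vanishes on T
  have hLvan : ∀ x ∈ LinearMap.range L, ev x = 0 := by
    rintro x ⟨⟨A, B⟩, rfl⟩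
    ext t
    obtain ⟨h1, h2⟩ := hT t.1 t.2
    simp only [L, ev, LinearMap.coe_mk, AddHom.coe_mk, map_add, map_mul, Pi.zero_apply,
      Pi.add_apply]
    rw [h1, h2]
    ring
  -- ker L = range K
  have hker : LinearMap.ker L = LinearMap.range K := by
    apply le_antisymm
    · rintro ⟨A, B⟩ hAB
      simp only [LinearMap.mem_ker, L, LinearMap.coe_mk, AddHom.coe_mk] at hAB
      by_cases hA : (A : S) = 0
      · have hB : (B : S) = 0 := by
          have : q * (B : S) = 0 := by rw [← hAB, hA]; ring
          rcases mul_eq_zero.mp this with h | h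
          · exact absurd h hq
          · exact h
        refine ⟨0, ?_⟩
        rw [map_zero]
        exact (Prod.ext (Subtype.ext (by simp [hA])) (Subtype.ext (by simp [hB]))).symm
      · have hdvd : q ∣ (A : S) * p := ⟨-(B : S), by linear_combination hAB⟩
        have hnop : ∀ ⦃r : S⦄, r ∣ q → r ∣ p → ¬Prime r :=
          fun r hrq hrp hpr => hpr.not_unit (hcop r hrp hrq)
        have hqA : q ∣ (A : S) :=
          UniqueFactorizationMonoid.dvd_of_dvd_mul_left_of_no_prime_factors hq hnop hdvd
        obtain ⟨C, hC⟩ := hqA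
        have hC0 : C ≠ 0 := by rintro rfl; rw [mul_zero] at hC; exact hA hC
        have hBeq : (B : S) = -(p * C) := by
          have h2 : q * (p * C + (B : S)) = 0 := by
            linear_combination hAB - p * hC
          rcases mul_eq_zero.mp h2 with h | h
          · exact absurd h hq
          · linear_combination h
        have hCmem : C ∈ B₃ := by
          have hA1 := (mem_box.mp A.2).1
          have hA2 := (mem_box.mp A.2).2
          rw [hC, degreeOf0_mul hq hC0] at hA1
          rw [hC, degreeOf1_mul hq hC0] at hA2
          rw [hB₃, mem_box]
          omega
        exact ⟨⟨C, hCmem⟩, Prod.ext (Subtype.ext hC.symm) (Subtype.ext hBeq.symm)⟩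
    · intro x hx
      obtain ⟨C, rfl⟩ := hx
      simp only [LinearMap.mem_ker, L, K, LinearMap.coe_mk, AddHom.coe_mk]
      ring
  -- K injective
  have hKinj : Function.Injective K := by
    intro x y hxy
    have h1 : q * (x : S) = q * (y : S) := congrArg (fun z => (z.1 : S)) hxy
    have := mul_left_cancel₀ hq h1
    exact Subtype.ext this
  -- dimension count
  have e1 : Module.finrank ℂ (LinearMap.range φ) + Module.finrank ℂ (LinearMap.ker φ)
      = Module.finrank ℂ V := LinearMap.finrank_range_add_finrank_ker φ
  have e2 : Module.finrank ℂ (LinearMap.range φ) = s := by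
    rw [hφsurj]
    rw [finrank_top, Module.finrank_pi, Fintype.card_coe]
  have e3 : Module.finrank ℂ (LinearMap.range L) + Module.finrank ℂ (LinearMap.ker L)
      = Module.finrank ℂ B₁ + Module.finrank ℂ B₂ := by
    rw [LinearMap.finrank_range_add_finrank_ker L, Module.finrank_prod]
  have e4 : Module.finrank ℂ (LinearMap.ker L) = Module.finrank ℂ B₃ := by
    rw [hker, LinearMap.finrank_range_of_inj hKinj]
  have e5 : Module.finrank ℂ (LinearMap.range L) ≤ Module.finrank ℂ (LinearMap.ker φ) := by
    have hle : Submodule.comap V.subtype (LinearMap.range L) ≤ LinearMap.ker φ := by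
      intro x hx
      simp only [Submodule.mem_comap] at hx
      simp only [LinearMap.mem_ker, φ, LinearMap.comp_apply]
      exact hLvan _ hx
    calc Module.finrank ℂ (LinearMap.range L)
        = Module.finrank ℂ (Submodule.comap V.subtype (LinearMap.range L)) :=
          (LinearEquiv.finrank_eq (Submodule.comapSubtypeEquivOfLe hLV)).symm
      _ ≤ Module.finrank ℂ (LinearMap.ker φ) := Submodule.finrank_mono hle
  have f1 : Module.finrank ℂ V = (a+c+s+1) * (b+d+s+1) := finrank_box _ _
  have f2 : Module.finrank ℂ B₁ = (c+s+1) * (d+s+1) := finrank_box _ _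
  have f3 : Module.finrank ℂ B₂ = (a+s+1) * (b+s+1) := finrank_box _ _
  have f4 : Module.finrank ℂ B₃ = (s+1) * (s+1) := finrank_box _ _
  -- final arithmetic
  have hid : (a+c+s+1) * (b+d+s+1) + (s+1) * (s+1)
      = (c+s+1) * (d+s+1) + (a+s+1) * (b+s+1) + (a*d + b*c) := by ring
  omega
/-- the complex exponential point associated to a real point -/
noncomputable def ee (x : ℝ × ℝ) : ℂ × ℂ :=
  (Complex.exp (2 * Real.pi * Complex.I * x.1), Complex.exp (2 * Real.pi * Complex.I * x.2))

lemma term_eq_monomial (a : ℂ) (i j : ℕ) :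
    (C a * X 0 ^ i * X 1 ^ j : S) = monomial (Finsupp.single 0 i + Finsupp.single 1 j) a := by
  rw [C_apply, X_pow_eq_monomial, X_pow_eq_monomial, monomial_mul, monomial_mul]
  simp

lemma degreeOf_assocPoly_fst (k₁ k₂ : ℕ) (c : ℕ × ℕ → ℂ) :
    degreeOf 0 (assocPoly (rect k₁ k₂) c) ≤ k₁ - 1 := by
  classical
  rw [degreeOf_le_iff]
  intro m hm
  have h := MvPolynomial.support_sum hm
  rw [Finset.mem_biUnion] at h
  obtain ⟨k, hk, hmk⟩ := h
  rw [term_eq_monomial, support_monomial] at hmk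
  have hk1 : k.1 < k₁ := (Finset.mem_product.mp hk).1 |> Finset.mem_range.mp
  split at hmk
  · simp at hmk
  · rw [Finset.mem_singleton] at hmk
    subst hmk
    simp [Finsupp.single_apply]
    omega

lemma degreeOf_assocPoly_snd (k₁ k₂ : ℕ) (c : ℕ × ℕ → ℂ) :
    degreeOf 1 (assocPoly (rect k₁ k₂) c) ≤ k₂ - 1 := by
  classical
  rw [degreeOf_le_iff]
  intro m hm
  have h := MvPolynomial.support_sum hm
  rw [Finset.mem_biUnion] at h
  obtain ⟨k, hk, hmk⟩ := h
  rw [term_eq_monomial, support_monomial] at hmk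
  have hk2 : k.2 < k₂ := (Finset.mem_product.mp hk).2 |> Finset.mem_range.mp
  split at hmk
  · simp at hmk
  · rw [Finset.mem_singleton] at hmk
    subst hmk
    simp [Finsupp.single_apply]
    omega

lemma trig_eq_pev (Λ : Finset (ℕ × ℕ)) (c : ℕ × ℕ → ℂ) (x : ℝ × ℝ) :
    trigPolyNat Λ c x = pev (ee x) (assocPoly Λ c) := by
  rw [trigPolyNat, assocPoly, map_sum]
  refine Finset.sum_congr rfl fun k _ => ?_
  simp only [pev, map_mul, map_pow, eval_C, eval_X, ee]
  rw [Matrix.cons_val_zero, Matrix.cons_val_one, Matrix.cons_val_zero]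
  rw [← Complex.exp_nat_mul, ← Complex.exp_nat_mul,
    show (2 * (Real.pi:ℂ) * Complex.I * ((k.1:ℂ) * x.1 + (k.2:ℂ) * x.2))
      = (k.1:ℂ) * (2 * Real.pi * Complex.I * x.1) + (k.2:ℂ) * (2 * Real.pi * Complex.I * x.2)
      from by ring, Complex.exp_add]
  ring
lemma exp_injOn {u v : ℝ} (hu : u ∈ Set.Ico (0:ℝ) 1) (hv : v ∈ Set.Ico (0:ℝ) 1)
    (h : Complex.exp (2 * Real.pi * Complex.I * u) = Complex.exp (2 * Real.pi * Complex.I * v)) :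
    u = v := by
  obtain ⟨n, hn⟩ := Complex.exp_eq_exp_iff_exists_int.mp h
  have h2 : ((u - v - n : ℝ) : ℂ) * (2 * Real.pi * Complex.I) = 0 := by
    push_cast
    linear_combination hn
  have h3 : ((u - v - n : ℝ) : ℂ) = 0 := by
    rcases mul_eq_zero.mp h2 with h | h
    · exact h
    · exfalso
      simp [Complex.ext_iff, Real.pi_ne_zero] at h
  rw [Complex.ofReal_eq_zero] at h3
  have h4 : (n : ℝ) = u - v := by linarith
  have h5 : n = 0 := by
    have b1 : (-1 : ℝ) < n := by rw [h4]; obtain ⟨_,_⟩ := hu; obtain ⟨_,_⟩ := hv; linarith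
    have b2 : (n : ℝ) < 1 := by rw [h4]; obtain ⟨_,_⟩ := hu; obtain ⟨_,_⟩ := hv; linarith
    have b1' : (-1 : ℤ) < n := by exact_mod_cast b1
    have b2' : n < 1 := by exact_mod_cast b2
    omega
  rw [h5] at h4
  simp at h4
  linarith
end
end BezoutAux

/-- Bézout's inequality for band-limited (trigonometric) polynomials: if `μ` and `η` have
Fourier support in rectangles of sizes `k₁ × k₂` and `l₁ × l₂` and their associated complex
polynomials have no common non-constant factor, the system `μ(x) = η(x) = 0` has at most
`(k₁+k₂)(l₁+l₂)` solutions in `[0,1)²`. -/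
theorem bezout_trigPoly (k₁ k₂ l₁ l₂ : ℕ) (c d : ℕ × ℕ → ℂ)
    (hcop : ∀ p : MvPolynomial (Fin 2) ℂ,
      p ∣ assocPoly (rect k₁ k₂) c → p ∣ assocPoly (rect l₁ l₂) d → IsUnit p) :
    {x : ℝ × ℝ | x.1 ∈ Set.Ico (0 : ℝ) 1 ∧ x.2 ∈ Set.Ico (0 : ℝ) 1 ∧
        trigPolyNat (rect k₁ k₂) c x = 0 ∧ trigPolyNat (rect l₁ l₂) d x = 0}.Finite ∧
    {x : ℝ × ℝ | x.1 ∈ Set.Ico (0 : ℝ) 1 ∧ x.2 ∈ Set.Ico (0 : ℝ) 1 ∧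
        trigPolyNat (rect k₁ k₂) c x = 0 ∧ trigPolyNat (rect l₁ l₂) d x = 0}.ncard ≤
      (k₁ + k₂) * (l₁ + l₂) := by
  classical
  open BezoutAux in
  set P := assocPoly (rect k₁ k₂) c with hP
  set Q := assocPoly (rect l₁ l₂) d with hQ
  set Z := {x : ℝ × ℝ | x.1 ∈ Set.Ico (0 : ℝ) 1 ∧ x.2 ∈ Set.Ico (0 : ℝ) 1 ∧
      trigPolyNat (rect k₁ k₂) c x = 0 ∧ trigPolyNat (rect l₁ l₂) d x = 0} with hZ
  have hR : ∀ x ∈ Z, BezoutAux.pev (BezoutAux.ee x) P = 0 ∧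
      BezoutAux.pev (BezoutAux.ee x) Q = 0 := by
    intro x hx
    exact ⟨by rw [hP, ← BezoutAux.trig_eq_pev]; exact hx.2.2.1,
      by rw [hQ, ← BezoutAux.trig_eq_pev]; exact hx.2.2.2⟩
  by_cases hP0 : P = 0
  · have hQu : IsUnit Q := hcop Q (by rw [hP0]; exact dvd_zero Q) dvd_rfl
    have hempty : Z = ∅ := by
      ext x
      simp only [Set.mem_empty_iff_false, iff_false]
      intro hx
      exact (hQu.map (BezoutAux.pev (BezoutAux.ee x))).ne_zero (hR x hx).2
    rw [hempty]
    simp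
  by_cases hQ0 : Q = 0
  · have hPu : IsUnit P := hcop P dvd_rfl (by rw [hQ0]; exact dvd_zero P)
    have hempty : Z = ∅ := by
      ext x
      simp only [Set.mem_empty_iff_false, iff_false]
      intro hx
      exact (hPu.map (BezoutAux.pev (BezoutAux.ee x))).ne_zero (hR x hx).1
    rw [hempty]
    simp
  -- main case
  have hinj : Set.InjOn BezoutAux.ee Z := by
    intro x hx y hy hxy
    have h1 : x.1 = y.1 := BezoutAux.exp_injOn hx.1 hy.1 (congrArg Prod.fst hxy)
    have h2 : x.2 = y.2 := BezoutAux.exp_injOn hx.2.1 hy.2.1 (congrArg Prod.snd hxy)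
    exact Prod.ext h1 h2
  have bound : ∀ T : Finset (ℝ × ℝ), ↑T ⊆ Z → T.card ≤ (k₁ + k₂) * (l₁ + l₂) := by
    intro T hT
    have hinjT : Set.InjOn BezoutAux.ee ↑T := hinj.mono hT
    have hcard : (T.image BezoutAux.ee).card = T.card :=
      Finset.card_image_of_injOn hinjT
    have hzer : ∀ z ∈ T.image BezoutAux.ee,
        BezoutAux.pev z P = 0 ∧ BezoutAux.pev z Q = 0 := by
      intro z hz
      obtain ⟨x, hx, rfl⟩ := Finset.mem_image.mp hz
      exact hR x (hT hx)
    have h := BezoutAux.key P Q hP0 hQ0 hcop (T.image BezoutAux.ee) hzer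
    rw [hcard] at h
    have d1 : MvPolynomial.degreeOf 0 P ≤ k₁ := by
      rw [hP]; exact le_trans (BezoutAux.degreeOf_assocPoly_fst k₁ k₂ c) (Nat.sub_le _ _)
    have d2 : MvPolynomial.degreeOf 1 P ≤ k₂ := by
      rw [hP]; exact le_trans (BezoutAux.degreeOf_assocPoly_snd k₁ k₂ c) (Nat.sub_le _ _)
    have d3 : MvPolynomial.degreeOf 0 Q ≤ l₁ := by
      rw [hQ]; exact le_trans (BezoutAux.degreeOf_assocPoly_fst l₁ l₂ d) (Nat.sub_le _ _)
    have d4 : MvPolynomial.degreeOf 1 Q ≤ l₂ := by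
      rw [hQ]; exact le_trans (BezoutAux.degreeOf_assocPoly_snd l₁ l₂ d) (Nat.sub_le _ _)
    calc T.card ≤ MvPolynomial.degreeOf 0 P * MvPolynomial.degreeOf 1 Q +
          MvPolynomial.degreeOf 1 P * MvPolynomial.degreeOf 0 Q := h
      _ ≤ k₁ * l₂ + k₂ * l₁ := Nat.add_le_add (Nat.mul_le_mul d1 d4) (Nat.mul_le_mul d2 d3)
      _ ≤ (k₁ + k₂) * (l₁ + l₂) := by nlinarith
  have hfin : Z.Finite := by
    by_contra hinf
    obtain ⟨T, hTs, hTc⟩ := Set.Infinite.exists_subset_card_eq hinf ((k₁+k₂)*(l₁+l₂)+1)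
    have := bound T hTs
    omega
  refine ⟨hfin, ?_⟩
  rw [← Set.Finite.coe_toFinset hfin, Set.ncard_coe_finset]
  exact bound _ (by rw [Set.Finite.coe_toFinset])
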